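/- Let X be a discrete real random variable with countable support 𝒳 and pmf p_X (so p_X(x) = P(X = x) > 0 for x ∈ 𝒳 and ∑_{x∈𝒳} p_X(x) = 1). Then for every t > 0 and every integer M ≥ 2, ∑_{x ∈ X̄} max_{k∈[0:M−1]} p_X(x + kt) > 1, where X̄ = ⋃_{j=0}^{M−1} (𝒳 − jt) and 𝒳 − s = {x − s : x ∈ 𝒳}. -/

import Mathlib

open MeasureTheory ENNReal

/-- **Strict excess of the summed maxima of a shifted pmf (step (a)–(b) in the proof of
Theorem 4).** For a discrete real random variable with countable support `𝒳` and pmf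
`p_X`, for every `t > 0` and `M ≥ 2`,
`∑_{x ∈ X̄} max_{k∈[0:M−1]} p_X(x + kt) > 1`, where `X̄ = ⋃_{j=0}^{M−1} (𝒳 − jt)`. -/
theorem discrete_shifted_pmf_max_sum_gt_one
    (P : Measure ℝ) [IsProbabilityMeasure P]
    (hcount : Set.Countable {x : ℝ | P {x} ≠ 0})
    (hdisc : P {x : ℝ | P {x} ≠ 0}ᶜ = 0)
    (t : ℝ) (ht : 0 < t) (M : ℕ) (hM : 2 ≤ M) :
    1 < ∑' x : ↥(⋃ j : Fin M, (fun z => z - (j : ℝ) * t) '' {x : ℝ | P {x} ≠ 0}),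
          ⨆ k : Fin M, P {(x : ℝ) + (k : ℝ) * t} := by
  have hMpos : NeZero M := ⟨by omega⟩
  set 𝒳 : Set ℝ := {x : ℝ | P {x} ≠ 0} with h𝒳
  set S : Set ℝ := ⋃ j : Fin M, (fun z => z - (j : ℝ) * t) '' 𝒳 with hS
  have hScount : S.Countable := Set.countable_iUnion fun j => hcount.image _
  -- P 𝒳 = 1
  have hP𝒳 : P 𝒳 = 1 := by
    have h1 : (1 : ℝ≥0∞) = P Set.univ := (measure_univ).symm
    have h2 : P Set.univ ≤ P 𝒳 + P 𝒳ᶜ := by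
      rw [← Set.union_compl_self 𝒳]; exact measure_union_le _ _
    rw [hdisc, add_zero] at h2
    exact le_antisymm prob_le_one (by rw [h1]; exact h2)
  -- 𝒳 ⊆ S
  have h𝒳S : 𝒳 ⊆ S := by
    intro x hx
    refine Set.mem_iUnion.2 ⟨0, ⟨x, hx, ?_⟩⟩
    simp
  have hPS : P S = 1 :=
    le_antisymm prob_le_one (hP𝒳 ▸ measure_mono h𝒳S)
  -- sum of singleton masses over S equals P S = 1
  have hsum : ∑' x : S, P {(x : ℝ)} = 1 := by
    have := tsum_measure_preimage_singleton (μ := P) (f := id) hScount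
      (fun y _ => measurableSet_singleton y)
    simpa [hPS] using this
  -- find x0 in the support
  obtain ⟨x0, hx0⟩ : 𝒳.Nonempty := by
    rcases Set.eq_empty_or_nonempty 𝒳 with h | h
    · rw [h, measure_empty] at hP𝒳
      exact absurd hP𝒳.symm one_ne_zero
    · exact h
  have hx0pos : P {x0} ≠ 0 := hx0
  set y : ℕ → ℝ := fun n => x0 - n * t with hy
  -- find a descent point
  have hdesc : ∃ n : ℕ, P {y (n + 1)} < P {y n} := by
    by_contra hcon
    push_neg at hcon
    have hmono : ∀ n : ℕ, P {x0} ≤ P {y n} := by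
      intro n
      induction n with
      | zero => simp [hy]
      | succ n ih => exact ih.trans (hcon n)
    have hinj : Function.Injective y := by
      intro a b hab
      have : (a : ℝ) * t = b * t := by
        simp only [hy] at hab
        linarith
      exact Nat.cast_injective (mul_right_cancel₀ (ne_of_gt ht) this)
    have hd : Pairwise (Function.onFun Disjoint fun n : ℕ => ({y n} : Set ℝ)) := by
      intro a b hab
      simp only [Function.onFun, Set.disjoint_singleton]
      exact fun h => hab (hinj h)
    have hle : (∑' n : ℕ, P {y n}) ≤ P (⋃ n, {y n}) :=
      tsum_meas_le_meas_iUnion_of_disjoint P (fun n => measurableSet_singleton _) hd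
    have htop : (∑' n : ℕ, P {y n}) = ⊤ := by
      refine top_le_iff.1 ?_
      calc (⊤ : ℝ≥0∞) = ∑' _ : ℕ, P {x0} :=
            (ENNReal.tsum_const_eq_top_of_ne_zero hx0pos).symm
        _ ≤ ∑' n : ℕ, P {y n} := ENNReal.tsum_le_tsum hmono
    rw [htop] at hle
    exact (lt_irrefl ⊤ (lt_of_le_of_lt hle (lt_of_le_of_lt prob_le_one one_lt_top))).elim
  obtain ⟨n, hn⟩ := hdesc
  have hynpos : P {y n} ≠ 0 := fun h => by simp [h] at hn
  -- x* := y (n+1) ∈ S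
  have hxS : y (n + 1) ∈ S := by
    refine Set.mem_iUnion.2 ⟨⟨1, by omega⟩, ⟨y n, hynpos, ?_⟩⟩
    simp only [hy]
    push_cast
    ring
  -- apply strict tsum comparison
  have key : (∑' x : S, P {(x : ℝ)}) <
      ∑' x : S, ⨆ k : Fin M, P {(x : ℝ) + (k : ℝ) * t} := by
    refine ENNReal.tsum_lt_tsum (i := ⟨y (n + 1), hxS⟩) (by rw [hsum]; exact one_ne_top) ?_ ?_
    · intro a
      have := le_iSup (fun k : Fin M => P {(a : ℝ) + (k : ℝ) * t}) (0 : Fin M)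
      simpa using this
    · have h1 : P {y (n + 1) + ((⟨1, by omega⟩ : Fin M) : ℝ) * t} = P {y n} := by
        congr 1
        simp only [hy]
        push_cast
        ring_nf
      calc P {y (n + 1)} < P {y n} := hn
        _ = P {y (n + 1) + ((⟨1, by omega⟩ : Fin M) : ℝ) * t} := h1.symm
        _ ≤ ⨆ k : Fin M, P {y (n + 1) + (k : ℝ) * t} :=
          le_iSup (fun k : Fin M => P {y (n + 1) + (k : ℝ) * t}) _
  rw [hsum] at key
  exact key
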